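/- Let n ≥ 2 be an integer and z ∈ ℂ with |z|² = n. If x, y ∈ ℂ satisfy x − z·y ∈ {0,1,…,n−1} (a real integer digit) and |x| > √n + 1, then |y| < |x|. -/

import Mathlib

theorem stmt_10 (n : ℕ) (hn : 2 ≤ n) (z : ℂ) (habs : ‖z‖ ^ 2 = n)
    (x y : ℂ) (hdigit : ∃ e : ℕ, e < n ∧ x - z * y = (e : ℂ))
    (hx : Real.sqrt (n : ℝ) + 1 < ‖x‖) :
    ‖y‖ < ‖x‖ := by
  obtain ⟨e, he, heq⟩ := hdigit
  set s := Real.sqrt (n : ℝ) with hs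
  have hn0 : (0:ℝ) ≤ (n:ℝ) := by positivity
  have hzabs : ‖z‖ = s := by
    nlinarith [Real.sq_sqrt hn0, norm_nonneg z, Real.sqrt_nonneg (n:ℝ)]
  have hs1 : 1 < s := by
    have : (1:ℝ) < (n:ℝ) := by exact_mod_cast Nat.lt_of_lt_of_le one_lt_two hn
    nlinarith [Real.sq_sqrt hn0, Real.sqrt_nonneg (n:ℝ)]
  have hzy : z * y = x - (e : ℂ) := by linear_combination -heq
  have h1 : s * ‖y‖ = ‖x - (e : ℂ)‖ := by
    rw [← hzabs, ← norm_mul, hzy]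
  have h2 : ‖x - (e : ℂ)‖ ≤ ‖x‖ + (e : ℝ) := by
    calc ‖x - (e : ℂ)‖ ≤ ‖x‖ + ‖(e : ℂ)‖ :=
          norm_sub_le x _
      _ = ‖x‖ + (e : ℝ) := by simp
  have he' : (e : ℝ) ≤ (n : ℝ) - 1 := by
    have : (e : ℝ) + 1 ≤ (n : ℝ) := by exact_mod_cast he
    linarith
  have hsq : s ^ 2 = (n : ℝ) := Real.sq_sqrt hn0
  have key : s * ‖y‖ < s * ‖x‖ := by
    nlinarith [h1, h2]
  exact lt_of_mul_lt_mul_left key (by linarith : (0:ℝ) ≤ s)
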